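/- arXiv:1611.06808 — 3 statements merged into one kernel-verified Lean document; each statement's English description precedes it below -/
import Mathlib

section
/- Let P(x) = ∏_{j=1}^{k}(x² - x_j²)^{2n+2} with 0 < x_k < ⋯ < x_1 and set m = 2s(2n+2) for some s ≤ k. Then |P^{(m)}(0)| ≥ ∏_{j=1}^{k-s} x_j^{2(2n+2)}. -/
open Finset

open Polynomial in
lemma iteratedDeriv_polyEval (p : Polynomial ℝ) (m : ℕ) :
    iteratedDeriv m (fun t : ℝ => p.eval t) = fun t => ((derivative)^[m] p).eval t := by
  induction m with
  | zero => simp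
  | succ m ih =>
    rw [iteratedDeriv_succ, ih, Function.iterate_succ_apply']
    funext t
    exact Polynomial.deriv _

/-- Let `P x = ∏_{j=1}^{k} (x² - x_j²)^(2n+2)` with `0 < x k < ⋯ < x 1` and set
`m = 2s(2n+2)` for some `1 ≤ s ≤ k`. Then `|P^{(m)}(0)| ≥ ∏_{j=1}^{k-s} x j ^ (2(2n+2))`. -/
theorem stmt_9 (n k s : ℕ) (hs : 1 ≤ s) (hsk : s ≤ k) (x : ℕ → ℝ) (hpos : 0 < x k)
    (hanti : ∀ i j, 1 ≤ i → i < j → j ≤ k → x j < x i) :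
    ∏ j ∈ Finset.Icc 1 (k - s), x j ^ (2 * (2 * n + 2)) ≤
      |iteratedDeriv (2 * s * (2 * n + 2))
        (fun t : ℝ => ∏ j ∈ Finset.Icc 1 k, (t ^ 2 - x j ^ 2) ^ (2 * n + 2)) 0| := by
  classical
  open Polynomial in
  set N := 2 * n + 2 with hN
  set M : Multiset ℝ := (Finset.Icc 1 k).val.bind (fun j => Multiset.replicate N (x j ^ 2))
    with hM
  have hcardM : Multiset.card M = k * N := by
    simp only [hM, Multiset.card_bind, Function.comp_def, Multiset.card_replicate,
      Multiset.map_const', Multiset.sum_replicate, smul_eq_mul]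
    have : Multiset.card (Finset.Icc 1 k).val = k := by simp [Nat.card_Icc]
    rw [this]
  set q : Polynomial ℝ := (M.map (fun r => X - C r)).prod with hq
  have hqprod : q = ∏ j ∈ Finset.Icc 1 k, ((X : Polynomial ℝ) - C (x j ^ 2)) ^ N := by
    rw [hq, hM, Multiset.map_bind, Multiset.prod_bind, Finset.prod_eq_multiset_prod]
    simp only [Multiset.map_replicate, Multiset.prod_replicate]
  set Q : Polynomial ℝ := expand ℝ 2 q with hQ
  have hfun : (fun t : ℝ => ∏ j ∈ Finset.Icc 1 k, (t ^ 2 - x j ^ 2) ^ N)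
      = fun t => Q.eval t := by
    funext t
    rw [hQ, expand_eval, hqprod]
    simp [Polynomial.eval_prod]
  rw [hfun, iteratedDeriv_polyEval]
  simp only [← Polynomial.coeff_zero_eq_eval_zero]
  rw [ Polynomial.coeff_iterate_derivative,
    Nat.zero_add, Nat.descFactorial_self]
  have hmul : 2 * s * N = 2 * (s * N) := by ring
  have hcoeffQ : Q.coeff (2 * s * N) = q.coeff (s * N) := by
    rw [hmul, hQ, Polynomial.coeff_expand_mul' (by norm_num : 0 < 2)]
  have hsN : s * N ≤ Multiset.card M := by
    rw [hcardM]; exact Nat.mul_le_mul_right N hsk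
  have hcoeffq : q.coeff (s * N) =
      (-1) ^ (Multiset.card M - s * N) * M.esymm (Multiset.card M - s * N) := by
    rw [hq]; exact Multiset.prod_X_sub_C_coeff M hsN
  have hd : Multiset.card M - s * N = (k - s) * N := by
    rw [hcardM, Nat.sub_mul]
  -- the submultiset
  set M₀ : Multiset ℝ := (Finset.Icc 1 (k - s)).val.bind
      (fun j => Multiset.replicate N (x j ^ 2)) with hM₀
  have hcard₀ : Multiset.card M₀ = (k - s) * N := by
    simp only [hM₀, Multiset.card_bind, Function.comp_def, Multiset.card_replicate,
      Multiset.map_const', Multiset.sum_replicate, smul_eq_mul]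
    have : Multiset.card (Finset.Icc 1 (k - s)).val = k - s := by simp [Nat.card_Icc]
    rw [this, mul_comm]
  have hle : M₀ ≤ M := by
    rw [hM₀, hM]
    have hsub : Finset.Icc 1 (k - s) ⊆ Finset.Icc 1 k :=
      Finset.Icc_subset_Icc_right (Nat.sub_le k s)
    have hval : (Finset.Icc 1 (k - s)).val ≤ (Finset.Icc 1 k).val :=
      Finset.val_le_iff.mpr hsub
    obtain ⟨u, hu⟩ := Multiset.le_iff_exists_add.mp hval
    rw [hu, Multiset.add_bind]
    exact Multiset.le_add_right _ _
  have hmemM : ∀ r ∈ M, (0 : ℝ) ≤ r := by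
    intro r hr
    rw [hM] at hr
    obtain ⟨j, _, hr⟩ := Multiset.mem_bind.mp hr
    rw [Multiset.eq_of_mem_replicate hr]
    positivity
  have hmem : M₀ ∈ M.powersetCard ((k - s) * N) :=
    Multiset.mem_powersetCard.mpr ⟨hle, hcard₀⟩
  have hprod₀ : M₀.prod = ∏ j ∈ Finset.Icc 1 (k - s), x j ^ (2 * N) := by
    rw [hM₀, Multiset.prod_bind, Finset.prod_eq_multiset_prod]
    congr 1
    refine Multiset.map_congr rfl ?_
    intro j _
    rw [Multiset.prod_replicate, ← pow_mul, mul_comm]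
  have hesymm : M₀.prod ≤ M.esymm ((k - s) * N) := by
    rw [Multiset.esymm]
    refine Multiset.single_le_sum ?_ _ (Multiset.mem_map_of_mem _ hmem)
    intro y hy
    obtain ⟨t, ht, rfl⟩ := Multiset.mem_map.mp hy
    have ht' := (Multiset.mem_powersetCard.mp ht).1
    exact Multiset.prod_nonneg fun a ha => hmemM a (Multiset.mem_of_le ht' ha)
  have hesymm_nonneg : 0 ≤ M.esymm ((k - s) * N) :=
    le_trans (hprod₀ ▸ Finset.prod_nonneg fun j _ => by rw [pow_mul]; positivity) hesymm
  calc ∏ j ∈ Finset.Icc 1 (k - s), x j ^ (2 * N)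
      ≤ M.esymm ((k - s) * N) := hprod₀ ▸ hesymm
    _ ≤ (2 * s * N).factorial * M.esymm ((k - s) * N) := by
        have hfac : (1 : ℝ) ≤ ((2 * s * N).factorial : ℝ) := by
          exact_mod_cast Nat.one_le_iff_ne_zero.mpr (Nat.factorial_ne_zero _)
        nlinarith [hfac, hesymm_nonneg]
    _ = |(2 * s * N).factorial • Q.coeff (2 * s * N)| := by
        rw [hcoeffQ, hcoeffq, hd, nsmul_eq_mul, abs_mul, abs_mul, Nat.abs_cast,
          abs_pow, abs_neg, abs_one, one_pow, one_mul, abs_of_nonneg hesymm_nonneg]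
end

section
/- Let y_0, …, y_k be distinct real numbers and P a polynomial of degree ≤ k. Writing P in Lagrange form, for every j ≤ m ≤ k and every point t, |P^{(j)}(t)| ≤ C(k) · (max_{0≤i,ν≤k}|y_i - y_ν|)^{k-j} / (min_{i≠ν}|y_i - y_ν|)^k · max_{0≤ν≤k}|P(y_ν)|, for some constant C(k) depending only on k, provided t lies in the interval spanned by the y_i. -/
open Finset

section Aux
open Polynomial

lemma deriv_prod_lin (s : Finset ℕ) (y : ℕ → ℝ) :
    Polynomial.derivative (∏ i ∈ s, (X - C (y i))) =
      ∑ i ∈ s, ∏ x ∈ s.erase i, (X - C (y x)) := by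
  induction s using Finset.induction with
  | empty => simp
  | @insert a s ha ih =>
    rw [Finset.prod_insert ha, derivative_mul, Polynomial.derivative_X_sub_C, one_mul, ih,
      Finset.sum_insert ha, Finset.erase_insert ha, Finset.mul_sum]
    congr 1
    refine Finset.sum_congr rfl fun i hi => ?_
    rw [Finset.erase_insert_of_ne (by rintro rfl; exact ha hi),
      Finset.prod_insert (fun h => ha (Finset.mem_of_mem_erase h))]

lemma aux_prod_bound (t D : ℝ) (hD : 0 ≤ D) (j : ℕ) :
    ∀ (s : Finset ℕ) (y : ℕ → ℝ), (∀ i ∈ s, |t - y i| ≤ D) →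
    |(Polynomial.derivative^[j] (∏ i ∈ s, (X - C (y i)))).eval t| ≤
      (s.card : ℝ) ^ j * D ^ (s.card - j) := by
  induction j with
  | zero =>
    intro s y h
    simp only [Function.iterate_zero, id, eval_prod, eval_sub, eval_X, eval_C, pow_zero, one_mul,
      Nat.sub_zero, Finset.abs_prod]
    calc ∏ i ∈ s, |t - y i| ≤ ∏ _i ∈ s, D := Finset.prod_le_prod (fun i _ => abs_nonneg _) h
      _ = D ^ s.card := by rw [Finset.prod_const]
  | succ j ih =>
    intro s y h
    rw [Function.iterate_succ_apply, deriv_prod_lin,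
      Polynomial.iterate_derivative_sum, Polynomial.eval_finset_sum]
    calc |∑ i ∈ s, (Polynomial.derivative^[j] (∏ x ∈ s.erase i, (X - C (y x)))).eval t|
        ≤ ∑ i ∈ s, |(Polynomial.derivative^[j] (∏ x ∈ s.erase i, (X - C (y x)))).eval t| :=
          Finset.abs_sum_le_sum_abs _ _
      _ ≤ ∑ _i ∈ s, (s.card : ℝ) ^ j * D ^ (s.card - (j + 1)) := by
          refine Finset.sum_le_sum fun i hi => ?_
          have hb := ih (s.erase i) y (fun x hx => h x (Finset.mem_of_mem_erase hx))
          rw [Finset.card_erase_of_mem hi] at hb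
          have h2 : s.card - 1 - j = s.card - (j + 1) := by omega
          rw [h2] at hb
          refine hb.trans (mul_le_mul_of_nonneg_right ?_ (by positivity))
          exact pow_le_pow_left₀ (by positivity) (Nat.cast_le.mpr (Nat.sub_le _ _)) _
      _ = (s.card : ℝ) ^ (j + 1) * D ^ (s.card - (j + 1)) := by
          rw [Finset.sum_const, nsmul_eq_mul]; ring

end Aux

/-- Lagrange-interpolation bound: for distinct nodes `y 0 < ⋯ < y k`, a polynomial `P` of
degree ≤ `k`, and `j ≤ m ≤ k`, there is a constant `C` depending only on `k` such that for
`t ∈ [y 0, y k]`,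
`|P^{(j)}(t)| ≤ C * D^(k-j) / d^k * max_ν |P(y ν)|`,
where `D` is the maximal and `d` the minimal distance between distinct nodes. -/
theorem stmt_10 (k : ℕ) :
    ∃ C : ℝ, 0 < C ∧
      ∀ (y : ℕ → ℝ), (∀ i j, i < j → j ≤ k → y i < y j) →
      ∀ P : Polynomial ℝ, P.natDegree ≤ k →
      ∀ m ≤ k, ∀ j ≤ m, ∀ t ∈ Set.Icc (y 0) (y k),
      ∀ D d : ℝ, 0 < d →
        (∀ i ν, i ≤ k → ν ≤ k → |y i - y ν| ≤ D) →
        (∀ i ν, i ≤ k → ν ≤ k → i ≠ ν → d ≤ |y i - y ν|) →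
        |((Polynomial.derivative)^[j] P).eval t| ≤
          C * D ^ (k - j) / d ^ k *
            (Finset.Icc 0 k).sup' (by simp) (fun ν => |P.eval (y ν)|) := by
  refine ⟨((k : ℝ) + 1) ^ (k + 1), by positivity, ?_⟩
  intro y hy P hP m hm j hj t ht D d hd hDb hdb
  have hne : (Finset.Icc 0 k).Nonempty := ⟨0, by simp⟩
  set M := (Finset.Icc 0 k).sup' hne (fun ν => |P.eval (y ν)|) with hMdef
  have hmem : ∀ i, i ∈ Finset.Icc 0 k ↔ i ≤ k := by intro i; simp
  have hMle : ∀ ν, ν ≤ k → |P.eval (y ν)| ≤ M := fun ν hν =>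
    Finset.le_sup' (fun ν => |P.eval (y ν)|) ((hmem ν).mpr hν)
  have hM0 : 0 ≤ M := le_trans (abs_nonneg _) (hMle 0 (Nat.zero_le k))
  have hD0 : 0 ≤ D := le_trans (abs_nonneg _) (hDb 0 0 (Nat.zero_le k) (Nat.zero_le k))
  have hvs : Set.InjOn y (Finset.Icc 0 k) := by
    intro a ha b hb hab
    simp only [Finset.coe_Icc, Set.mem_Icc] at ha hb
    by_contra hne'
    rcases lt_trichotomy a b with h | h | h
    · exact absurd hab (ne_of_lt (hy a b h hb.2))
    · exact hne' h
    · exact absurd hab.symm (ne_of_lt (hy b a h ha.2))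
  have hcard : (Finset.Icc 0 k).card = k + 1 := by simp
  have hdeg : P.degree < ((Finset.Icc 0 k).card : WithBot ℕ) := by
    refine lt_of_le_of_lt Polynomial.degree_le_natDegree ?_
    exact_mod_cast (show P.natDegree < (Finset.Icc 0 k).card by omega)
  have hrep := Lagrange.eq_interpolate (v := y) hvs hdeg
  have hyb : ∀ i ∈ Finset.Icc 0 k, |t - y i| ≤ D := by
    intro i hi
    have hik : i ≤ k := (hmem i).mp hi
    have h0 : y 0 ≤ y i := by
      rcases Nat.eq_zero_or_pos i with h | h
      · rw [h]
      · exact le_of_lt (hy 0 i h hik)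
    have hk : y i ≤ y k := by
      rcases eq_or_lt_of_le hik with h | h
      · rw [h]
      · exact le_of_lt (hy i k h le_rfl)
    have ht1 := ht.1; have ht2 := ht.2
    calc |t - y i| ≤ y k - y 0 := abs_sub_le_iff.mpr ⟨by linarith, by linarith⟩
      _ ≤ |y k - y 0| := le_abs_self _
      _ ≤ D := hDb k 0 le_rfl (Nat.zero_le k)
  have hbasis : ∀ ν ∈ Finset.Icc 0 k,
      Polynomial.C (P.eval (y ν)) * Lagrange.basis (Finset.Icc 0 k) y ν =
        Polynomial.C (P.eval (y ν) * ∏ i ∈ (Finset.Icc 0 k).erase ν, (y ν - y i)⁻¹) *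
          ∏ i ∈ (Finset.Icc 0 k).erase ν, (Polynomial.X - Polynomial.C (y i)) := by
    intro ν _
    simp only [Lagrange.basis, Lagrange.basisDivisor]
    rw [Finset.prod_mul_distrib, ← map_prod, ← mul_assoc, ← map_mul]
  rw [hrep, Lagrange.interpolate_apply, Finset.sum_congr rfl hbasis,
    Polynomial.iterate_derivative_sum]
  simp_rw [Polynomial.iterate_derivative_C_mul]
  rw [Polynomial.eval_finset_sum]
  simp_rw [Polynomial.eval_mul, Polynomial.eval_C]
  have hterm : ∀ ν ∈ Finset.Icc 0 k,
      |(P.eval (y ν) * ∏ i ∈ (Finset.Icc 0 k).erase ν, (y ν - y i)⁻¹) *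
        (Polynomial.derivative^[j]
          (∏ i ∈ (Finset.Icc 0 k).erase ν, (Polynomial.X - Polynomial.C (y i)))).eval t| ≤
      (M * (d⁻¹) ^ k) * ((k : ℝ) ^ j * D ^ (k - j)) := by
    intro ν hν
    have hνk : ν ≤ k := (hmem ν).mp hν
    have hcarde : ((Finset.Icc 0 k).erase ν).card = k := by
      rw [Finset.card_erase_of_mem hν, hcard]; omega
    rw [abs_mul, abs_mul, Finset.abs_prod]
    have h1 : ∏ i ∈ (Finset.Icc 0 k).erase ν, |(y ν - y i)⁻¹| ≤ (d⁻¹) ^ k := by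
      have hpt : ∀ i ∈ (Finset.Icc 0 k).erase ν, |(y ν - y i)⁻¹| ≤ d⁻¹ := by
        intro i hi
        obtain ⟨hiν, hik⟩ := Finset.mem_erase.mp hi
        rw [abs_inv]
        exact inv_anti₀ hd (hdb ν i hνk ((hmem i).mp hik) (fun h => hiν (h.symm)))
      calc ∏ i ∈ (Finset.Icc 0 k).erase ν, |(y ν - y i)⁻¹|
          ≤ ∏ _i ∈ (Finset.Icc 0 k).erase ν, d⁻¹ :=
            Finset.prod_le_prod (fun i _ => abs_nonneg _) hpt
        _ = (d⁻¹) ^ k := by rw [Finset.prod_const, hcarde]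
    have h2 : |(Polynomial.derivative^[j]
        (∏ i ∈ (Finset.Icc 0 k).erase ν, (Polynomial.X - Polynomial.C (y i)))).eval t| ≤
        (k : ℝ) ^ j * D ^ (k - j) := by
      have := aux_prod_bound t D hD0 j ((Finset.Icc 0 k).erase ν) y
        (fun i hi => hyb i (Finset.mem_of_mem_erase hi))
      rwa [hcarde] at this
    refine mul_le_mul ?_ h2 (abs_nonneg _) (by positivity)
    exact mul_le_mul (hMle ν hνk) h1 (Finset.prod_nonneg fun i _ => abs_nonneg _) hM0
  calc |∑ ν ∈ Finset.Icc 0 k,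
        (P.eval (y ν) * ∏ i ∈ (Finset.Icc 0 k).erase ν, (y ν - y i)⁻¹) *
          (Polynomial.derivative^[j]
            (∏ i ∈ (Finset.Icc 0 k).erase ν, (Polynomial.X - Polynomial.C (y i)))).eval t|
      ≤ ∑ ν ∈ Finset.Icc 0 k,
        |(P.eval (y ν) * ∏ i ∈ (Finset.Icc 0 k).erase ν, (y ν - y i)⁻¹) *
          (Polynomial.derivative^[j]
            (∏ i ∈ (Finset.Icc 0 k).erase ν, (Polynomial.X - Polynomial.C (y i)))).eval t| :=
        Finset.abs_sum_le_sum_abs _ _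
    _ ≤ ∑ _ν ∈ Finset.Icc 0 k, (M * (d⁻¹) ^ k) * ((k : ℝ) ^ j * D ^ (k - j)) :=
        Finset.sum_le_sum hterm
    _ = ((k : ℝ) + 1) * ((M * (d⁻¹) ^ k) * ((k : ℝ) ^ j * D ^ (k - j))) := by
        rw [Finset.sum_const, hcard, nsmul_eq_mul]; push_cast; ring
    _ ≤ ((k : ℝ) + 1) * ((M * (d⁻¹) ^ k) * (((k : ℝ) + 1) ^ k * D ^ (k - j))) := by
        have hkj : (k : ℝ) ^ j ≤ ((k : ℝ) + 1) ^ k :=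
          le_trans (pow_le_pow_left₀ (by positivity) (by linarith) j)
            (pow_le_pow_right₀ (by linarith) (le_trans hj hm))
        gcongr
    _ = ((k : ℝ) + 1) ^ (k + 1) * D ^ (k - j) / d ^ k * M := by
        have hd0 : d ≠ 0 := ne_of_gt hd
        rw [inv_pow]
        field_simp
        ring
end

section
/- Leibniz rule for divided differences: for functions f, g : ℝ → ℝ and distinct points y_0, …, y_n, (fg)[y_0,…,y_n] = ∑_{j=0}^{n} f[y_0,…,y_j] · g[y_j,…,y_n]. -/
open Finset

/-- The divided difference `divDiff f y i s = f[y i, y (i+1), …, y (i+s)]`, defined by the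
usual recursion for (distinct) nodes. -/
noncomputable def divDiff (f : ℝ → ℝ) (y : ℕ → ℝ) : ℕ → ℕ → ℝ
  | i, 0 => f (y i)
  | i, s + 1 => (divDiff f y i s - divDiff f y (i + 1) s) / (y i - y (i + s + 1))

lemma divDiff_leibniz_aux (f g : ℝ → ℝ) (y : ℕ → ℝ) :
    ∀ s i, (∀ a b, a ≤ s → b ≤ s → a ≠ b → y (i + a) ≠ y (i + b)) →
    divDiff (fun t => f t * g t) y i s =
      ∑ j ∈ Finset.range (s + 1), divDiff f y i j * divDiff g y (i + j) (s - j) := by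
  intro s
  induction s with
  | zero => intro i h; simp [divDiff]
  | succ s IH =>
    intro i h
    have hyd : y i ≠ y (i + s + 1) := by
      have := h 0 (s + 1) (by omega) (by omega) (by omega)
      rwa [Nat.add_zero, show i + (s + 1) = i + s + 1 from by omega] at this
    have hd : y i - y (i + s + 1) ≠ 0 := sub_ne_zero.mpr hyd
    -- identity for f
    have hF : ∀ j, j ≤ s → divDiff f y (i + 1) j
        = divDiff f y i j - divDiff f y i (j + 1) * (y i - y (i + j + 1)) := by
      intro j hj
      have hne : y i - y (i + j + 1) ≠ 0 := by
        refine sub_ne_zero.mpr ?_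
        have := h 0 (j + 1) (by omega) (by omega) (by omega)
        rwa [Nat.add_zero, show i + (j + 1) = i + j + 1 from by omega] at this
      have hdef : divDiff f y i (j + 1)
          = (divDiff f y i j - divDiff f y (i + 1) j) / (y i - y (i + j + 1)) := rfl
      rw [hdef]
      field_simp
      ring
    -- identity for g
    have hG : ∀ j, j ≤ s → divDiff g y (i + j) (s - j)
        = divDiff g y (i + j) (s + 1 - j) * (y (i + j) - y (i + s + 1))
          + divDiff g y (i + j + 1) (s - j) := by
      intro j hj
      have hne : y (i + j) - y (i + s + 1) ≠ 0 := by
        refine sub_ne_zero.mpr ?_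
        have := h j (s + 1) (by omega) (by omega) (by omega)
        rwa [show i + (s + 1) = i + s + 1 from by omega] at this
      have hdef : divDiff g y (i + j) (s - j + 1)
          = (divDiff g y (i + j) (s - j) - divDiff g y (i + j + 1) (s - j))
            / (y (i + j) - y (i + j + (s - j) + 1)) := rfl
      have h1 : i + j + (s - j) + 1 = i + s + 1 := by omega
      have h2 : s + 1 - j = s - j + 1 := by omega
      rw [h2, hdef, h1]
      field_simp
      ring
    -- induction hypotheses at i and i+1
    have hi : divDiff (fun t => f t * g t) y i s
        = ∑ j ∈ Finset.range (s + 1), divDiff f y i j * divDiff g y (i + j) (s - j) := by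
      refine IH i ?_
      intro a b ha hb hab
      exact h a b (by omega) (by omega) hab
    have hi1 : divDiff (fun t => f t * g t) y (i + 1) s
        = ∑ j ∈ Finset.range (s + 1), divDiff f y (i + 1) j * divDiff g y (i + j + 1) (s - j) := by
      have := IH (i + 1) ?_
      · rw [this]
        refine Finset.sum_congr rfl fun j _ => ?_
        rw [show i + 1 + j = i + j + 1 from by omega]
      · intro a b ha hb hab
        have := h (a + 1) (b + 1) (by omega) (by omega) (by omega)
        rwa [show i + (a + 1) = i + 1 + a from by omega,
          show i + (b + 1) = i + 1 + b from by omega] at this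
    -- the key telescoping identity
    have key : (∑ j ∈ Finset.range (s + 1), divDiff f y i j * divDiff g y (i + j) (s - j))
        - ∑ j ∈ Finset.range (s + 1), divDiff f y (i + 1) j * divDiff g y (i + j + 1) (s - j)
        = (y i - y (i + s + 1)) *
          ∑ j ∈ Finset.range (s + 2), divDiff f y i j * divDiff g y (i + j) (s + 1 - j) := by
      have lhs_eq : (∑ j ∈ Finset.range (s + 1), divDiff f y i j * divDiff g y (i + j) (s - j))
          - ∑ j ∈ Finset.range (s + 1), divDiff f y (i + 1) j * divDiff g y (i + j + 1) (s - j)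
          = ∑ j ∈ Finset.range (s + 1),
              ((divDiff f y i j * divDiff g y (i + j) (s + 1 - j)) * (y (i + j) - y (i + s + 1))
                + (divDiff f y i (j + 1) * divDiff g y (i + (j + 1)) (s + 1 - (j + 1)))
                  * (y i - y (i + j + 1))) := by
        rw [← Finset.sum_sub_distrib]
        refine Finset.sum_congr rfl fun j hj => ?_
        have hj' : j ≤ s := by simpa [Nat.lt_succ_iff] using hj
        rw [hF j hj', hG j hj',
          show s + 1 - (j + 1) = s - j from by omega,
          show i + (j + 1) = i + j + 1 from by omega]
        ring
      have e1 : ∑ j ∈ Finset.range (s + 2),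
          divDiff f y i j * divDiff g y (i + j) (s + 1 - j) * (y (i + j) - y (i + s + 1))
          = ∑ j ∈ Finset.range (s + 1),
            divDiff f y i j * divDiff g y (i + j) (s + 1 - j) * (y (i + j) - y (i + s + 1)) := by
        rw [Finset.sum_range_succ, show i + (s + 1) = i + s + 1 from by omega]
        simp
      have e2 : ∑ j ∈ Finset.range (s + 2),
          divDiff f y i j * divDiff g y (i + j) (s + 1 - j) * (y i - y (i + j))
          = ∑ j ∈ Finset.range (s + 1),
            divDiff f y i (j + 1) * divDiff g y (i + (j + 1)) (s + 1 - (j + 1))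
              * (y i - y (i + j + 1)) := by
        rw [Finset.sum_range_succ']
        simp only [Nat.add_zero, sub_self, mul_zero, add_zero]
        refine Finset.sum_congr rfl fun j _ => ?_
        rw [show i + (j + 1) = i + j + 1 from by omega]
      have e3 : (y i - y (i + s + 1)) *
          ∑ j ∈ Finset.range (s + 2), divDiff f y i j * divDiff g y (i + j) (s + 1 - j)
          = (∑ j ∈ Finset.range (s + 2),
              divDiff f y i j * divDiff g y (i + j) (s + 1 - j) * (y (i + j) - y (i + s + 1)))
            + ∑ j ∈ Finset.range (s + 2),
              divDiff f y i j * divDiff g y (i + j) (s + 1 - j) * (y i - y (i + j)) := by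
        rw [Finset.mul_sum, ← Finset.sum_add_distrib]
        exact Finset.sum_congr rfl fun j _ => by ring
      rw [lhs_eq, e3, e1, e2, ← Finset.sum_add_distrib]
    -- finish
    have hdef : divDiff (fun t => f t * g t) y i (s + 1)
        = (divDiff (fun t => f t * g t) y i s - divDiff (fun t => f t * g t) y (i + 1) s)
          / (y i - y (i + s + 1)) := rfl
    rw [hdef, hi, hi1, div_eq_iff hd]
    rw [show s + 1 + 1 = s + 2 from rfl] at *
    linarith [key]

/-- Leibniz rule for divided differences: for `f, g : ℝ → ℝ` and distinct points
`y 0, …, y n`, `(fg)[y 0,…,y n] = ∑_{j=0}^{n} f[y 0,…,y j] * g[y j,…,y n]`. -/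
theorem stmt_16 (f g : ℝ → ℝ) (n : ℕ) (y : ℕ → ℝ)
    (hdist : ∀ i j, i ≤ n → j ≤ n → i ≠ j → y i ≠ y j) :
    divDiff (fun t => f t * g t) y 0 n =
      ∑ j ∈ Finset.range (n + 1), divDiff f y 0 j * divDiff g y j (n - j) := by
  have := divDiff_leibniz_aux f g y n 0 (by
    intro a b ha hb hab
    simpa using hdist a b ha hb hab)
  simpa using this
end
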